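/- Let 𝐂 be a full semi-AFL, let G be a finitely generated group, and let H ≤ G be a subgroup of finite index. Then 𝐂^∀(G | H) = 𝐂^∀(H): a subset of H is a 𝐂^∀-subset of G if and only if it is a 𝐂^∀-subset of H. -/

import Mathlib

/-!  Common framework: classes of languages over finite alphabets, `C^∀`- and
`C^∃`-subsets of finitely generated monoids and groups, closure properties
(cone, full semi-AFL), and `C^•`-flatness.  -/

/-- A class of languages: for each finite alphabet `Fin n`, a collection of languages over it. -/
abbrev LangClass : Type := ∀ n : ℕ, Set (Set (List (Fin n)))

/-- `π` is a surjective monoid homomorphism from the free monoid on `Fin n`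
(words, under concatenation) onto `M`; i.e. it presents `M` as a monoid generated
by the finite set `Fin n`. -/
structure FreeHomOnto {n : ℕ} (M : Type) [Monoid M] (π : List (Fin n) → M) : Prop where
  map_nil : π [] = 1
  map_append : ∀ u v : List (Fin n), π (u ++ v) = π u * π v
  surjective : Function.Surjective π

/-- `X ⊆ M` is a `C^∀`-subset of `M` w.r.t. the generating map `π`:
the full preimage `π⁻¹(X)` is a language of the class `C`. -/
def CForall (C : LangClass) {n : ℕ} {M : Type} [Monoid M]
    (π : List (Fin n) → M) (X : Set M) : Prop :=
  {w : List (Fin n) | π w ∈ X} ∈ C n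

/-- `X ⊆ M` is a `C^∃`-subset of `M` w.r.t. the generating map `π`:
some language of the class `C` is mapped onto `X` by `π`. -/
def CExists (C : LangClass) {n : ℕ} {M : Type} [Monoid M]
    (π : List (Fin n) → M) (X : Set M) : Prop :=
  ∃ L ∈ C n, π '' L = X

/-- Closure under inverse images of homomorphisms of free monoids on finite alphabets.
Such a homomorphism is determined by its values `f i` on letters, sending `w` to `w.flatMap f`. -/
def ClosedUnderInvHom (C : LangClass) : Prop :=
  ∀ (m n : ℕ) (f : Fin m → List (Fin n)), ∀ L ∈ C n,
    {w : List (Fin m) | w.flatMap f ∈ L} ∈ C m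

/-- Closure under images of homomorphisms of free monoids on finite alphabets. -/
def ClosedUnderHom (C : LangClass) : Prop :=
  ∀ (m n : ℕ) (f : Fin m → List (Fin n)), ∀ L ∈ C m,
    (fun w : List (Fin m) => w.flatMap f) '' L ∈ C n

/-- A language over `Fin n` is regular if it is accepted by a DFA with finitely many states. -/
def IsRegularLang {n : ℕ} (L : Set (List (Fin n))) : Prop :=
  ∃ (σ : Type) (_ : Fintype σ) (A : DFA (Fin n) σ), ∀ w : List (Fin n), w ∈ A.accepts ↔ w ∈ L

/-- Closure under intersection with regular languages. -/
def ClosedUnderInterReg (C : LangClass) : Prop :=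
  ∀ (n : ℕ), ∀ L ∈ C n, ∀ R : Set (List (Fin n)), IsRegularLang R → L ∩ R ∈ C n

/-- Closure under (binary) union. -/
def ClosedUnderUnion (C : LangClass) : Prop :=
  ∀ (n : ℕ), ∀ L₁ ∈ C n, ∀ L₂ ∈ C n, L₁ ∪ L₂ ∈ C n

/-- A cone: a class of languages closed under homomorphisms, inverse homomorphisms,
and intersection with regular languages. -/
def IsCone (C : LangClass) : Prop :=
  ClosedUnderHom C ∧ ClosedUnderInvHom C ∧ ClosedUnderInterReg C

/-- A full semi-AFL: a cone closed under union. -/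
def IsFullSemiAFL (C : LangClass) : Prop :=
  IsCone C ∧ ClosedUnderUnion C

/-- `G` is `C^∀`-flat as a group: for every finitely generated subgroup `H ≤ G`
(presented by a finite monoid generating map `ρ`), a subset of `H` is a `C^∀`-subset
of `G` iff it is a `C^∀`-subset of `H`; i.e. `C^∀(G | H) = C^∀(H)`. -/
def GroupCForallFlat (C : LangClass) (G : Type) [Group G] : Prop :=
  ∀ (H : Subgroup G) (n k : ℕ) (π : List (Fin n) → G) (ρ : List (Fin k) → ↥H),
    FreeHomOnto G π → FreeHomOnto (↥H) ρ →
      ∀ X : Set G, X ⊆ (H : Set G) →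
        (CForall C π X ↔ CForall C ρ (Subtype.val ⁻¹' X))

/-- `G` is `C^∃`-flat as a group: for every finitely generated subgroup `H ≤ G`,
a subset of `H` is a `C^∃`-subset of `G` iff it is a `C^∃`-subset of `H`;
i.e. `C^∃(G | H) = C^∃(H)`. -/
def GroupCExistsFlat (C : LangClass) (G : Type) [Group G] : Prop :=
  ∀ (H : Subgroup G) (n k : ℕ) (π : List (Fin n) → G) (ρ : List (Fin k) → ↥H),
    FreeHomOnto G π → FreeHomOnto (↥H) ρ →
      ∀ X : Set G, X ⊆ (H : Set G) →
        (CExists C π X ↔ CExists C ρ (Subtype.val ⁻¹' X))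

/-- `M` is `C^∀`-flat as a monoid: for every finitely generated submonoid `N ≤ M`,
a subset of `N` is a `C^∀`-subset of `M` iff it is a `C^∀`-subset of `N`;
i.e. `C^∀(M | N) = C^∀(N)`. -/
def MonoidCForallFlat (C : LangClass) (M : Type) [Monoid M] : Prop :=
  ∀ (N : Submonoid M) (n k : ℕ) (π : List (Fin n) → M) (ρ : List (Fin k) → ↥N),
    FreeHomOnto M π → FreeHomOnto (↥N) ρ →
      ∀ X : Set M, X ⊆ (N : Set M) →
        (CForall C π X ↔ CForall C ρ (Subtype.val ⁻¹' X))

/-- `M` is `C^∃`-flat as a monoid: for every finitely generated submonoid `N ≤ M`,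
a subset of `N` is a `C^∃`-subset of `M` iff it is a `C^∃`-subset of `N`;
i.e. `C^∃(M | N) = C^∃(N)`. -/
def MonoidCExistsFlat (C : LangClass) (M : Type) [Monoid M] : Prop :=
  ∀ (N : Submonoid M) (n k : ℕ) (π : List (Fin n) → M) (ρ : List (Fin k) → ↥N),
    FreeHomOnto M π → FreeHomOnto (↥N) ρ →
      ∀ X : Set M, X ⊆ (N : Set M) →
        (CExists C π X ↔ CExists C ρ (Subtype.val ⁻¹' X))
namespace Stmt5Aux

variable {G : Type} [Group G] (H : Subgroup G) {n : ℕ} (π : List (Fin n) → G)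

/-- The set of right cosets of `H`. -/
abbrev T : Type := Quotient (QuotientGroup.rightRel H)

/-- Natural projection onto right cosets. -/
def mkr (x : G) : T H := Quotient.mk'' x

lemma mkr_eq_iff {x y : G} : mkr H x = mkr H y ↔ y * x⁻¹ ∈ H := by
  rw [mkr, mkr, Quotient.eq'', QuotientGroup.rightRel_apply]

open Classical in
/-- A transversal, normalized so that the coset of `1` has representative `1`. -/
noncomputable def rep (t : T H) : G := if t = mkr H 1 then 1 else Quotient.out t

lemma mkr_rep (t : T H) : mkr H (rep H t) = t := by
  rw [rep]
  split
  · next h => rw [h]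
  · exact Quotient.out_eq' t

lemma rep_one : rep H (mkr H 1) = 1 := by rw [rep, if_pos rfl]

lemma mkr_mul {x y : G} (z : G) (h : mkr H x = mkr H y) :
    mkr H (x * z) = mkr H (y * z) := by
  rw [mkr_eq_iff] at h ⊢
  have : y * z * (x * z)⁻¹ = y * x⁻¹ := by group
  rw [this]; exact h

/-- Transition of the coset automaton. -/
noncomputable def delta (t : T H) (a : Fin n) : T H := mkr H (rep H t * π [a])

/-- Schreier generators. -/
noncomputable def sch (t : T H) (a : Fin n) : G :=
  rep H t * π [a] * (rep H (delta H π t a))⁻¹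

lemma sch_mem (t : T H) (a : Fin n) : sch H π t a ∈ H := by
  have h1 : mkr H (rep H (delta H π t a)) = mkr H (rep H t * π [a]) := mkr_rep H _
  rw [mkr_eq_iff] at h1
  exact h1

/-- Canonical lift of a word over the generators of `G` to a run of the coset automaton. -/
noncomputable def lift : T H → List (Fin n) → List (T H × Fin n)
  | _, [] => []
  | t, a :: w => (t, a) :: lift (delta H π t a) w

variable {m : ℕ} (e : Fin m ≃ T H × Fin n)

open Classical in
/-- Transition function of the coset automaton, with a sink state `none`. -/
noncomputable def stepO : Option (T H) → Fin m → Option (T H) := fun s i =>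
  s.bind fun t => if (e i).1 = t then some (delta H π t (e i).2) else none

lemma foldl_none (u : List (Fin m)) : u.foldl (stepO H π e) none = none := by
  induction u with
  | nil => rfl
  | cons i u ih => simpa [stepO] using ih

lemma sound (hπ : FreeHomOnto G π) {k : ℕ} {ρ : List (Fin k) → ↥H}
    (hρ : FreeHomOnto (↥H) ρ) (gw : T H → Fin n → List (Fin k))
    (hgw : ∀ t a, (ρ (gw t a) : G) = sch H π t a) :
    ∀ (u : List (Fin m)) (t t' : T H), u.foldl (stepO H π e) (some t) = some t' →
      (ρ (u.flatMap fun i => gw (e i).1 (e i).2) : G)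
        = rep H t * π (u.flatMap fun i => [(e i).2]) * (rep H t')⁻¹ := by
  intro u
  induction u with
  | nil =>
    intro t t' h
    simp only [List.foldl_nil, Option.some.injEq] at h
    subst h
    simp only [List.flatMap_nil, hρ.map_nil, hπ.map_nil, OneMemClass.coe_one, mul_one]
    group
  | cons i u ih =>
    intro t t' h
    by_cases hc : (e i).1 = t
    · simp only [List.foldl_cons] at h
      have hstep : stepO H π e (some t) i = some (delta H π t (e i).2) := by
        simp [stepO, hc]
      rw [hstep] at h
      have ih' := ih (delta H π t (e i).2) t' h
      simp only [List.flatMap_cons, hρ.map_append, hπ.map_append, hc]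
      rw [MulMemClass.coe_mul, hgw, ih', sch]
      group
    · exfalso
      simp only [List.foldl_cons] at h
      have hstep : stepO H π e (some t) i = none := by simp [stepO, hc]
      rw [hstep, foldl_none] at h
      exact absurd h.symm (Option.some_ne_none _)

lemma lift_flat : ∀ (w : List (Fin n)) (t : T H),
    (((lift H π t w).map e.symm).flatMap fun i => [(e i).2]) = w := by
  intro w
  induction w with
  | nil => intro t; rfl
  | cons a w ih =>
    intro t
    simp only [lift, List.map_cons, List.flatMap_cons, Equiv.apply_symm_apply, ih]
    rfl

lemma lift_run (hπ : FreeHomOnto G π) : ∀ (w : List (Fin n)) (t : T H),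
    ((lift H π t w).map e.symm).foldl (stepO H π e) (some t)
      = some (mkr H (rep H t * π w)) := by
  intro w
  induction w with
  | nil =>
    intro t
    simp only [lift, List.map_nil, List.foldl_nil, hπ.map_nil, mul_one, mkr_rep]
  | cons a w ih =>
    intro t
    simp only [lift, List.map_cons, List.foldl_cons]
    have hstep : stepO H π e (some t) (e.symm (t, a)) = some (delta H π t a) := by
      simp [stepO, Equiv.apply_symm_apply]
    rw [hstep, ih]
    congr 1
    have h1 : mkr H (rep H (delta H π t a)) = mkr H (rep H t * π [a]) := mkr_rep H _
    have h2 := mkr_mul H (π w) h1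
    rw [h2]
    congr 1
    rw [mul_assoc]
    congr 1
    have : (a :: w) = [a] ++ w := rfl
    rw [this, hπ.map_append]

end Stmt5Aux

open Stmt5Aux in
lemma stmt5_forward (C : LangClass) (hInv : ClosedUnderInvHom C)
    {G : Type} [Group G] {n k : ℕ} (π : List (Fin n) → G) (hπ : FreeHomOnto G π)
    (H : Subgroup G) (ρ : List (Fin k) → ↥H) (hρ : FreeHomOnto (↥H) ρ)
    (X : Set G) (h : CForall C π X) : CForall C ρ (Subtype.val ⁻¹' X) := by
  choose f hf using fun b : Fin k => hπ.surjective (ρ [b] : G)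
  have key : ∀ w : List (Fin k), π (w.flatMap f) = (ρ w : G) := by
    intro w
    induction w with
    | nil => simp [hπ.map_nil, hρ.map_nil]
    | cons b w ih =>
      have h1 : (b :: w) = [b] ++ w := rfl
      rw [List.flatMap_cons, hπ.map_append, hf, ih, h1, hρ.map_append,
        MulMemClass.coe_mul]
  have hset : {w : List (Fin k) | ρ w ∈ Subtype.val ⁻¹' X}
      = {w : List (Fin k) | w.flatMap f ∈ {v : List (Fin n) | π v ∈ X}} := by
    ext w
    simp [Set.mem_setOf_eq, key w]
  rw [CForall, hset]
  exact hInv k n f _ h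

open Stmt5Aux in
lemma stmt5_backward (C : LangClass) (hC : IsFullSemiAFL C)
    {G : Type} [Group G] {n k : ℕ} (π : List (Fin n) → G) (hπ : FreeHomOnto G π)
    (H : Subgroup G) (hfi : H.FiniteIndex)
    (ρ : List (Fin k) → ↥H) (hρ : FreeHomOnto (↥H) ρ)
    (X : Set G) (hX : X ⊆ (H : Set G))
    (h : CForall C ρ (Subtype.val ⁻¹' X)) : CForall C π X := by
  classical
  obtain ⟨⟨hHom, hInv, hReg⟩, _⟩ := hC
  haveI := hfi
  haveI : Finite (G ⧸ H) := H.finite_quotient_of_finiteIndex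
  haveI : Finite (T H) :=
    Finite.of_equiv _ (QuotientGroup.quotientRightRelEquivQuotientLeftRel H).symm
  haveI : Fintype (T H) := Fintype.ofFinite _
  set m := Fintype.card (T H × Fin n) with hm
  set e : Fin m ≃ T H × Fin n := (Fintype.equivFin (T H × Fin n)).symm with he
  have hsur : ∀ (t : T H) (a : Fin n),
      ∃ w : List (Fin k), ρ w = ⟨sch H π t a, sch_mem H π t a⟩ :=
    fun t a => hρ.surjective _
  choose gw hgw using hsur
  have hgw' : ∀ t a, (ρ (gw t a) : G) = sch H π t a := by
    intro t a; rw [hgw]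
  set t₁ : T H := mkr H 1 with ht₁
  -- the three languages
  set Lk : Set (List (Fin k)) := {w | ρ w ∈ Subtype.val ⁻¹' X} with hLk
  set M1 : Set (List (Fin m)) :=
    {u | (u.flatMap fun i => gw (e i).1 (e i).2) ∈ Lk} with hM1
  set R : Set (List (Fin m)) :=
    {u | u.foldl (stepO H π e) (some t₁) = some t₁} with hR
  have hRreg : IsRegularLang R := by
    refine ⟨Option (T H), inferInstance,
      ⟨stepO H π e, some t₁, {some t₁}⟩, fun w => ?_⟩
    constructor
    · intro hw
      exact hw
    · intro hw
      exact hw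
  have hM1C : M1 ∈ C m := hInv m k _ Lk h
  have hM2C : M1 ∩ R ∈ C m := hReg m _ hM1C R hRreg
  have key : ((fun u : List (Fin m) => u.flatMap fun i => [(e i).2]) '' (M1 ∩ R))
      = {w : List (Fin n) | π w ∈ X} := by
    ext w
    constructor
    · rintro ⟨u, ⟨hu1, hu2⟩, rfl⟩
      have hs := sound H π e hπ hρ gw hgw' u t₁ t₁ hu2
      rw [rep_one, one_mul, inv_one, mul_one] at hs
      have : (ρ (u.flatMap fun i => gw (e i).1 (e i).2) : G) ∈ X := hu1
      rw [hs] at this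
      exact this
    · intro hw
      have hwH : π w ∈ H := hX hw
      refine ⟨(lift H π t₁ w).map e.symm, ⟨?_, ?_⟩, lift_flat H π e w t₁⟩
      · -- membership in M1
        have hrun : ((lift H π t₁ w).map e.symm).foldl (stepO H π e) (some t₁)
            = some (mkr H (π w)) := by
          rw [lift_run H π e hπ w t₁, ht₁, rep_one, one_mul]
        have hcoset : mkr H (π w) = t₁ := by
          rw [ht₁, mkr_eq_iff]
          simpa using H.inv_mem hwH
        rw [hcoset] at hrun
        have hs := sound H π e hπ hρ gw hgw' _ t₁ t₁ hrun
        rw [rep_one, one_mul, inv_one, mul_one, lift_flat H π e w t₁] at hs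
        show (ρ _ : G) ∈ X
        rw [hs]
        exact hw
      · -- membership in R
        show ((lift H π t₁ w).map e.symm).foldl (stepO H π e) (some t₁) = some t₁
        rw [lift_run H π e hπ w t₁, ht₁, rep_one, one_mul]
        congr 1
        rw [mkr_eq_iff]
        simpa using H.inv_mem hwH
  rw [CForall, ← key]
  exact hHom m n _ _ hM2C


/-- Let `C` be a full semi-AFL, `G` a finitely generated group and
`H ≤ G` a subgroup of finite index (presented by a finite generating map `ρ`).
Then `C^∀(G | H) = C^∀(H)`: a subset of `H` is a `C^∀`-subset of `G` iff it is a
`C^∀`-subset of `H`. -/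
theorem stmt5 (C : LangClass) (hC : IsFullSemiAFL C)
    {G : Type} [Group G] {n k : ℕ} (π : List (Fin n) → G) (hπ : FreeHomOnto G π)
    (H : Subgroup G) (hfi : H.FiniteIndex)
    (ρ : List (Fin k) → ↥H) (hρ : FreeHomOnto (↥H) ρ)
    (X : Set G) (hX : X ⊆ (H : Set G)) :
    CForall C π X ↔ CForall C ρ (Subtype.val ⁻¹' X) := by
  constructor
  · exact fun h => stmt5_forward C hC.1.2.1 π hπ H ρ hρ X h
  · exact fun h => stmt5_backward C hC π hπ H hfi ρ hρ X hX h
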